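/- Fix M, N, K positive integers, a = N+(M−1)K, b = −K, and let Γ ⊆ ℤ^M be the subgroup generated by the vectors γ_n (n-th coordinate a, others b). The symmetric group S_M acts on ℤ^M/Γ by permuting coordinates (well-defined since Γ is S_M-invariant), and the number of regular orbits (orbits of size M!, equivalently orbits all of whose representatives in ℤ^M have pairwise distinct coordinates) equals (N/(KM+N))·C(KM+N, M). -/

import Mathlib

namespace CRO

def gam (M N K : ℕ) : AddSubgroup (Fin M → ℤ) :=
  AddSubgroup.closure (Set.range fun n : Fin M => fun m =>
    if m = n then (N + ((M : ℤ) - 1) * K : ℤ) else (-K : ℤ))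

variable {M N K : ℕ}

lemma mem_gam_iff {x : Fin M → ℤ} :
    x ∈ gam M N K ↔ ∃ t : Fin M → ℤ,
      ∀ m, x m = t m * ((N : ℤ) + M * K) - (∑ n, t n) * K := by
  classical
  rw [gam, ← Submodule.span_int_eq_addSubgroupClosure, Submodule.mem_toAddSubgroup,
    Submodule.mem_span_range_iff_exists_fun]
  refine exists_congr fun t => ?_
  rw [funext_iff]
  refine forall_congr' fun m => ?_
  have h : ∀ n : Fin M,
      (t n • fun m : Fin M => if m = n then (N + ((M : ℤ) - 1) * K : ℤ) else (-K : ℤ)) m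
      = t n * (-K : ℤ) + (if m = n then t n * ((N : ℤ) + M * K) else 0) := by
    intro n; simp only [Pi.smul_apply, smul_eq_mul]; split <;> ring
  rw [Finset.sum_apply]
  simp only [h]
  rw [Finset.sum_add_distrib, Finset.sum_ite_eq, if_pos (Finset.mem_univ m), ← Finset.sum_mul]
  constructor <;> intro he <;> [skip; rw [he]] <;> [rw [← he]; skip] <;> ring

end CRO

namespace CRO
variable {M N K : ℕ}

noncomputable def phi (M N K : ℕ) (i0 : Fin M) (I : Fin M → ℤ) :
    (Fin M → ZMod (N + M * K)) × ZMod N :=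
  (fun m => ((I m - I i0 : ℤ) : ZMod (N + M * K)),
   ((I i0 + (K : ℤ) * ∑ m, (I m - I i0) / ((N : ℤ) + M * K) : ℤ) : ZMod N))

lemma sum_const_int (c : ℤ) : (∑ _n : Fin M, c) = (M : ℤ) * c := by
  rw [Finset.sum_const, Finset.card_univ, Fintype.card_fin, nsmul_eq_mul]

lemma phi_const (hN : 0 < N) (i0 : Fin M) {I x : Fin M → ℤ} (hx : x ∈ gam M N K) :
    phi M N K i0 (I + x) = phi M N K i0 I := by
  obtain ⟨t, ht⟩ := mem_gam_iff.mp hx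
  have hLz0 : ((N : ℤ) + M * K) ≠ 0 := by positivity
  have hd : ∀ m, (I + x) m - (I + x) i0
      = (I m - I i0) + (t m - t i0) * ((N : ℤ) + M * K) := by
    intro m; simp only [Pi.add_apply]; rw [ht m, ht i0]; ring
  unfold phi
  refine Prod.ext ?_ ?_
  · funext m
    simp only
    have hz : (((t m - t i0) * ((N : ℤ) + M * K) : ℤ) : ZMod (N + M * K)) = 0 :=
      (ZMod.intCast_zmod_eq_zero_iff_dvd _ _).mpr ⟨t m - t i0, by push_cast; ring⟩
    rw [hd m, Int.cast_add, hz, add_zero]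
  · simp only
    have hsum : ∀ m, ((I + x) m - (I + x) i0) / ((N : ℤ) + M * K)
        = (I m - I i0) / ((N : ℤ) + M * K) + (t m - t i0) := by
      intro m; rw [hd m, Int.add_mul_ediv_right _ _ hLz0]
    have h2 : (∑ m, ((I + x) m - (I + x) i0) / ((N : ℤ) + M * K))
        = (∑ m, (I m - I i0) / ((N : ℤ) + M * K)) + ((∑ n, t n) - M * t i0) := by
      simp only [hsum]
      rw [Finset.sum_add_distrib, Finset.sum_sub_distrib, sum_const_int]
    have h3 : ((I + x) i0 + (K : ℤ) * (∑ m, ((I + x) m - (I + x) i0) / ((N : ℤ) + M * K)))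
        = (I i0 + (K : ℤ) * ∑ m, (I m - I i0) / ((N : ℤ) + M * K)) + t i0 * N := by
      rw [h2, Pi.add_apply, ht i0]; ring
    have hz : ((t i0 * (N : ℤ) : ℤ) : ZMod N) = 0 :=
      (ZMod.intCast_zmod_eq_zero_iff_dvd _ _).mpr ⟨t i0, by ring⟩
    rw [h3, Int.cast_add, hz, add_zero]

end CRO

namespace CRO
variable {M N K : ℕ}

lemma mk'_eq_mk'_iff {Γ : AddSubgroup (Fin M → ℤ)} {x y : Fin M → ℤ} :
    QuotientAddGroup.mk' Γ x = QuotientAddGroup.mk' Γ y ↔ -x + y ∈ Γ := by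
  rw [QuotientAddGroup.mk'_apply, QuotientAddGroup.mk'_apply, QuotientAddGroup.eq]

lemma phi_inj (hN : 0 < N) (i0 : Fin M) {I I' : Fin M → ℤ}
    (h : phi M N K i0 I = phi M N K i0 I') : -I + I' ∈ gam M N K := by
  have hLz0 : ((N : ℤ) + M * K) ≠ 0 := by positivity
  have hLzN : ((N + M * K : ℕ) : ℤ) = (N : ℤ) + M * K := by push_cast; ring
  have h1 := congrFun (congrArg Prod.fst h)
  have h2 := congrArg Prod.snd h
  simp only [phi] at h1 h2
  have hdvd : ∀ m, ((N : ℤ) + M * K) ∣ (I' m - I' i0) - (I m - I i0) := by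
    intro m
    rw [← hLzN]
    refine (ZMod.intCast_zmod_eq_zero_iff_dvd _ _).mp ?_
    rw [Int.cast_sub, ← h1 m, sub_self]
  choose u hu using hdvd
  have hw : ∀ m, (I' m - I' i0) / ((N : ℤ) + M * K)
      = (I m - I i0) / ((N : ℤ) + M * K) + u m := by
    intro m
    have h := sub_eq_iff_eq_add.mp (hu m)
    rw [h, mul_comm, add_comm, Int.add_mul_ediv_right _ _ hLz0]
  have hsum : (∑ m, (I' m - I' i0) / ((N : ℤ) + M * K))
      = (∑ m, (I m - I i0) / ((N : ℤ) + M * K)) + ∑ m, u m := by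
    simp only [hw]; rw [Finset.sum_add_distrib]
  have hNdvd : (N : ℤ) ∣ (I' i0 - I i0) + K * (∑ m, u m) := by
    have h2' : (((I' i0 + K * ∑ m, (I' m - I' i0) / ((N : ℤ) + M * K))
        - (I i0 + K * ∑ m, (I m - I i0) / ((N : ℤ) + M * K)) : ℤ) : ZMod N) = 0 := by
      rw [Int.cast_sub, ← h2, sub_self]
    have hdd := (ZMod.intCast_zmod_eq_zero_iff_dvd _ _).mp h2'
    have he : (I' i0 + K * ∑ m, (I' m - I' i0) / ((N : ℤ) + M * K))
        - (I i0 + K * ∑ m, (I m - I i0) / ((N : ℤ) + M * K))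
        = (I' i0 - I i0) + K * (∑ m, u m) := by rw [hsum]; ring
    rwa [he] at hdd
  obtain ⟨s, hs⟩ := hNdvd
  refine mem_gam_iff.mpr ⟨fun m => u m + s, fun m => ?_⟩
  have hT : (∑ n : Fin M, (u n + s)) = (∑ n, u n) + (M : ℤ) * s := by
    rw [Finset.sum_add_distrib, sum_const_int]
  rw [Pi.add_apply, Pi.neg_apply, hT]
  linear_combination hu m + hs

lemma phi_mk (hN : 0 < N) (i0 : Fin M) (f : Fin M → ZMod (N + M * K)) (x : ZMod N)
    (hf : f i0 = 0) :
    phi M N K i0 (fun m => (x.val : ℤ) + ((f m).val : ℤ)) = (f, x) := by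
  haveI : NeZero (N + M * K) := ⟨by omega⟩
  haveI : NeZero N := ⟨hN.ne'⟩
  have hfi0 : ((f i0).val : ℤ) = 0 := by rw [hf, ZMod.val_zero]; rfl
  have hd : ∀ m, ((x.val : ℤ) + ((f m).val : ℤ)) - ((x.val : ℤ) + ((f i0).val : ℤ))
      = ((f m).val : ℤ) := by intro m; rw [hfi0]; ring
  have hz : ∀ m : Fin M, (((f m).val : ℤ)) / ((N : ℤ) + M * K) = 0 := by
    intro m
    refine Int.ediv_eq_zero_of_lt (by positivity) ?_
    have h := ZMod.val_lt (f m)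
    have : ((f m).val : ℤ) < ((N + M * K : ℕ) : ℤ) := by exact_mod_cast h
    push_cast at this; linarith
  unfold phi
  refine Prod.ext ?_ ?_
  · funext m
    simp only [hd m, Int.cast_natCast]
    exact ZMod.natCast_rightInverse (f m)
  · simp only [hd, hfi0, add_zero, add_sub_cancel_left, hz, Finset.sum_const_zero, mul_zero, add_zero, Int.cast_natCast]
    exact ZMod.natCast_rightInverse x

end CRO

namespace CRO
variable {M N K : ℕ}

def reg (M N K : ℕ) (q : (Fin M → ℤ) ⧸ gam M N K) : Prop :=
  ∀ I : Fin M → ℤ, QuotientAddGroup.mk' (gam M N K) I = q → ∀ m n, m ≠ n → I m ≠ I n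

def rl (M N K : ℕ)
    (q q' : {q : (Fin M → ℤ) ⧸ gam M N K // reg M N K q}) : Prop :=
  ∃ σ : Equiv.Perm (Fin M), ∃ I : Fin M → ℤ,
    QuotientAddGroup.mk' (gam M N K) I = q.1 ∧ QuotientAddGroup.mk' (gam M N K) (I ∘ σ) = q'.1

lemma reg_iff (hN : 0 < N) (i0 : Fin M) (I : Fin M → ℤ) :
    reg M N K (QuotientAddGroup.mk' (gam M N K) I)
      ↔ Function.Injective (phi M N K i0 I).1 := by
  have hLz0 : (0:ℤ) < ((N : ℤ) + M * K) := by positivity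
  have hLzN : ((N + M * K : ℕ) : ℤ) = (N : ℤ) + M * K := by push_cast; ring
  constructor
  · intro hreg m n hϕ
    by_contra hmn
    have hdvd : ((N : ℤ) + M * K) ∣ I n - I m := by
      rw [← hLzN]
      refine (ZMod.intCast_zmod_eq_zero_iff_dvd _ _).mp ?_
      simp only [phi] at hϕ
      rw [show I n - I m = (I n - I i0) - (I m - I i0) by ring, Int.cast_sub, ← hϕ, sub_self]
    obtain ⟨s, hs⟩ := hdvd
    set x : Fin M → ℤ := fun k =>
      (if k = m then s else 0) * ((N : ℤ) + M * K) - s * K with hx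
    have hxmem : x ∈ gam M N K := by
      refine mem_gam_iff.mpr ⟨fun k => if k = m then s else 0, fun k => ?_⟩
      have : (∑ n : Fin M, if n = m then s else 0) = s := by
        rw [Finset.sum_ite_eq' Finset.univ m fun _ => s, if_pos (Finset.mem_univ m)]
      rw [hx]; simp only [this]
    have hJ : QuotientAddGroup.mk' (gam M N K) (I + x)
        = QuotientAddGroup.mk' (gam M N K) I := by
      rw [mk'_eq_mk'_iff]
      have : -(I + x) + I = -x := by abel
      rw [this]
      exact neg_mem hxmem
    refine hreg (I + x) hJ m n hmn ?_
    simp only [Pi.add_apply, hx, eq_self_iff_true, if_true]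
    rw [if_neg (show ¬ n = m from fun hnm => hmn hnm.symm)]
    linear_combination -hs
  · intro hinj J hJ m n hmn hJmn
    obtain ⟨t, ht⟩ := mem_gam_iff.mp (mk'_eq_mk'_iff.mp hJ)
    refine hmn (hinj ?_)
    simp only [phi]
    have h1 : I m - I i0 = (I n - I i0) + (t m - t n) * ((N : ℤ) + M * K) := by
      have em := ht m
      have en := ht n
      simp only [Pi.add_apply, Pi.neg_apply] at em en
      linear_combination em - en + hJmn
    have hz : (((t m - t n) * ((N : ℤ) + M * K) : ℤ) : ZMod (N + M * K)) = 0 :=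
      (ZMod.intCast_zmod_eq_zero_iff_dvd _ _).mpr ⟨t m - t n, by push_cast; ring⟩
    rw [h1, Int.cast_add, hz, add_zero]

end CRO

namespace CRO
variable {M N K : ℕ}

lemma gam_comp (σ : Equiv.Perm (Fin M)) {x : Fin M → ℤ} (hx : x ∈ gam M N K) :
    x ∘ σ ∈ gam M N K := by
  obtain ⟨t, ht⟩ := mem_gam_iff.mp hx
  refine mem_gam_iff.mpr ⟨t ∘ σ, fun m => ?_⟩
  have hsum : (∑ n, (t ∘ σ) n) = ∑ n, t n := Equiv.sum_comp σ t
  rw [hsum, Function.comp_apply, Function.comp_apply, ht (σ m)]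

noncomputable def actQ (σ : Equiv.Perm (Fin M)) :
    (Fin M → ℤ) ⧸ gam M N K → (Fin M → ℤ) ⧸ gam M N K :=
  Quotient.map' (fun I => I ∘ σ) (by
    intro a b hab
    rw [QuotientAddGroup.leftRel_apply] at hab ⊢
    have : -(a ∘ σ) + b ∘ σ = (-a + b) ∘ σ := by funext m; simp
    rw [this]
    exact gam_comp σ hab)

lemma actQ_mk (σ : Equiv.Perm (Fin M)) (I : Fin M → ℤ) :
    actQ σ (QuotientAddGroup.mk' (gam M N K) I)
      = QuotientAddGroup.mk' (gam M N K) (I ∘ σ) := rfl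

lemma act_reg (σ : Equiv.Perm (Fin M)) {q : (Fin M → ℤ) ⧸ gam M N K}
    (h : reg M N K q) : reg M N K (actQ σ q) := by
  obtain ⟨I, rfl⟩ := QuotientAddGroup.mk'_surjective (gam M N K) q
  intro J hJ m n hmn hJmn
  rw [actQ_mk, mk'_eq_mk'_iff] at hJ
  have hmem : -(J ∘ ⇑σ⁻¹) + I ∈ gam M N K := by
    have := gam_comp σ⁻¹ hJ
    have he : (-J + I ∘ ⇑σ) ∘ ⇑σ⁻¹ = -(J ∘ ⇑σ⁻¹) + I := by
      funext k; simp [Equiv.Perm.inv_def]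
    rwa [he] at this
  refine h (J ∘ ⇑σ⁻¹) (mk'_eq_mk'_iff.mpr hmem) (σ m) (σ n)
    (fun hc => hmn (σ.injective hc)) ?_
  simpa using hJmn

noncomputable def act (σ : Equiv.Perm (Fin M))
    (q : {q : (Fin M → ℤ) ⧸ gam M N K // reg M N K q}) :
    {q : (Fin M → ℤ) ⧸ gam M N K // reg M N K q} :=
  ⟨actQ σ q.1, act_reg σ q.2⟩

lemma act_one (q : {q : (Fin M → ℤ) ⧸ gam M N K // reg M N K q}) : act 1 q = q := by
  refine Subtype.ext ?_
  obtain ⟨I, hI⟩ := QuotientAddGroup.mk'_surjective (gam M N K) q.1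
  show actQ 1 q.1 = q.1
  rw [← hI, actQ_mk]
  congr 1

lemma act_mul (σ τ : Equiv.Perm (Fin M))
    (q : {q : (Fin M → ℤ) ⧸ gam M N K // reg M N K q}) :
    act σ (act τ q) = act (τ * σ) q := by
  refine Subtype.ext ?_
  obtain ⟨I, hI⟩ := QuotientAddGroup.mk'_surjective (gam M N K) q.1
  show actQ σ (actQ τ q.1) = actQ (τ * σ) q.1
  rw [← hI, actQ_mk, actQ_mk, actQ_mk]
  congr 1

lemma rl_iff {q q' : {q : (Fin M → ℤ) ⧸ gam M N K // reg M N K q}} :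
    rl M N K q q' ↔ ∃ σ : Equiv.Perm (Fin M), act σ q = q' := by
  constructor
  · rintro ⟨σ, I, h1, h2⟩
    refine ⟨σ, Subtype.ext ?_⟩
    show actQ σ q.1 = q'.1
    rw [← h1, actQ_mk, h2]
  · rintro ⟨σ, rfl⟩
    obtain ⟨I, hI⟩ := QuotientAddGroup.mk'_surjective (gam M N K) q.1
    exact ⟨σ, I, hI, by show _ = actQ σ q.1; rw [← hI, actQ_mk]⟩

lemma rl_equivalence : Equivalence (rl M N K) := by
  constructor
  · intro q; exact rl_iff.mpr ⟨1, act_one q⟩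
  · intro q q' h
    obtain ⟨σ, rfl⟩ := rl_iff.mp h
    refine rl_iff.mpr ⟨σ⁻¹, ?_⟩
    rw [act_mul, mul_inv_cancel, act_one]
  · intro q q' q'' h h'
    obtain ⟨σ, rfl⟩ := rl_iff.mp h
    obtain ⟨τ, rfl⟩ := rl_iff.mp h'
    exact rl_iff.mpr ⟨σ * τ, (act_mul τ σ q).symm⟩

end CRO

namespace CRO
variable {M N K : ℕ}

lemma act_free (hN : 0 < N) (i0 : Fin M) {σ : Equiv.Perm (Fin M)}
    {q : {q : (Fin M → ℤ) ⧸ gam M N K // reg M N K q}} (h : act σ q = q) : σ = 1 := by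
  obtain ⟨I, hI⟩ := QuotientAddGroup.mk'_surjective (gam M N K) q.1
  have hreg : reg M N K (QuotientAddGroup.mk' (gam M N K) I) := by rw [hI]; exact q.2
  have hinj := (reg_iff hN i0 I).mp hreg
  have hmk : QuotientAddGroup.mk' (gam M N K) (I ∘ σ) = QuotientAddGroup.mk' (gam M N K) I := by
    have h1 : actQ σ q.1 = q.1 := congrArg Subtype.val h
    rw [← hI] at h1
    rw [← actQ_mk σ I]
    exact h1
  obtain ⟨t, ht⟩ := mem_gam_iff.mp (mk'_eq_mk'_iff.mp hmk)
  simp only [Pi.add_apply, Pi.neg_apply, Function.comp_apply] at ht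
  have hT : (∑ n, t n) = 0 := by
    have hsum := Finset.sum_congr rfl (fun m (_ : m ∈ Finset.univ) => ht m)
    rw [Finset.sum_add_distrib, Finset.sum_neg_distrib, Finset.sum_sub_distrib,
      ← Finset.sum_mul, Equiv.sum_comp σ I] at hsum
    have h0 : (0 : ℤ) = (∑ n, t n) * ((N : ℤ) + M * K) - (M : ℤ) * ((∑ n, t n) * K) := by
      rw [← sum_const_int ((∑ n, t n) * K)]; linarith [hsum]
    have : (∑ n, t n) * (N : ℤ) = 0 := by linear_combination -h0
    have hN0 : (N : ℤ) ≠ 0 := by exact_mod_cast hN.ne'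
    exact (mul_eq_zero.mp this).resolve_right hN0
  have hfix : ∀ m, σ m = m := by
    intro m
    refine hinj ?_
    simp only [phi]
    have hd : I (σ m) - I i0 = (I m - I i0) + ((-t m) * ((N : ℤ) + M * K)) := by
      have := ht m
      rw [hT] at this
      linarith [this]
    have hz : (((-t m) * ((N : ℤ) + M * K) : ℤ) : ZMod (N + M * K)) = 0 :=
      (ZMod.intCast_zmod_eq_zero_iff_dvd _ _).mpr ⟨-t m, by push_cast; ring⟩
    rw [hd, Int.cast_add, hz, add_zero]
  exact Equiv.ext hfix

end CRO

namespace CRO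

theorem master (M N K : ℕ) (hM : 0 < M) (hN : 0 < N) (hK : 0 < K) :
    (Nat.card (Quot (rl M N K)) : ℚ)
      = (N : ℚ) / (K * M + N) * ((K * M + N).choose M) := by
  classical
  haveI : NeZero (N + M * K) := ⟨by omega⟩
  haveI : NeZero N := ⟨hN.ne'⟩
  set i0 : Fin M := ⟨0, hM⟩ with hi0
  have hout : ∀ q : (Fin M → ℤ) ⧸ gam M N K,
      QuotientAddGroup.mk' (gam M N K) q.out = q := by
    intro q; rw [QuotientAddGroup.mk'_apply]; exact QuotientAddGroup.out_eq' q
  have phi_congr : ∀ {I J : Fin M → ℤ},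
      QuotientAddGroup.mk' (gam M N K) I = QuotientAddGroup.mk' (gam M N K) J →
      phi M N K i0 I = phi M N K i0 J := by
    intro I J h
    have hm := mk'_eq_mk'_iff.mp h
    have he : I + (-I + J) = J := by abel
    rw [← he]
    exact (phi_const hN i0 hm).symm
  -- Part A : bijection with {f // f i0 = 0 ∧ injective} × ZMod N
  set D := Nat.card {f : Fin M → ZMod (N + M * K) // f i0 = 0 ∧ Function.Injective f} with hD
  let FF : {q : (Fin M → ℤ) ⧸ gam M N K // reg M N K q} →
      ({f : Fin M → ZMod (N + M * K) // f i0 = 0 ∧ Function.Injective f} × ZMod N) :=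
    fun q => ⟨⟨(phi M N K i0 q.1.out).1, by simp [phi],
      (reg_iff hN i0 q.1.out).mp (by rw [hout q.1]; exact q.2)⟩,
      (phi M N K i0 q.1.out).2⟩
  have hFFbij : Function.Bijective FF := by
    constructor
    · intro q q' h
      have ha' : (FF q).1.1 = (FF q').1.1 := congrArg (fun p => p.1.1) h
      have hb' : (FF q).2 = (FF q').2 := congrArg Prod.snd h
      have ha : (phi M N K i0 q.1.out).1 = (phi M N K i0 q'.1.out).1 := ha'
      have hb : (phi M N K i0 q.1.out).2 = (phi M N K i0 q'.1.out).2 := hb'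
      have h2 := phi_inj hN i0 (Prod.ext ha hb)
      exact Subtype.ext (by rw [← hout q.1, ← hout q'.1]; exact mk'_eq_mk'_iff.mpr h2)
    · rintro ⟨⟨f, hf0, hfinj⟩, x⟩
      set I : Fin M → ℤ := fun m => (x.val : ℤ) + ((f m).val : ℤ) with hI
      have hphi : phi M N K i0 I = (f, x) := phi_mk hN i0 f x hf0
      have hreg : reg M N K (QuotientAddGroup.mk' (gam M N K) I) := by
        refine (reg_iff hN i0 I).mpr ?_
        have hfst : (phi M N K i0 I).1 = f := congrArg Prod.fst hphi
        rw [hfst]; exact hfinj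
      refine ⟨⟨QuotientAddGroup.mk' (gam M N K) I, hreg⟩, ?_⟩
      have hco : phi M N K i0 (QuotientAddGroup.mk' (gam M N K) I).out = (f, x) :=
        (phi_congr (hout _)).trans hphi
      refine Prod.ext (Subtype.ext ?_) ?_
      · show (phi M N K i0 (QuotientAddGroup.mk' (gam M N K) I).out).1 = f
        exact congrArg Prod.fst hco
      · show (phi M N K i0 (QuotientAddGroup.mk' (gam M N K) I).out).2 = x
        exact congrArg Prod.snd hco
  have hcard1 : Nat.card {q : (Fin M → ℤ) ⧸ gam M N K // reg M N K q} = D * N := by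
    rw [Nat.card_eq_of_bijective FF hFFbij, Nat.card_prod, Nat.card_zmod]
  -- Part B : D * (N + M * K) = descFactorial
  have e2 : ({f : Fin M → ZMod (N + M * K) // f i0 = 0 ∧ Function.Injective f}
      × ZMod (N + M * K)) ≃ (Fin M ↪ ZMod (N + M * K)) :=
    { toFun := fun p => ⟨fun m => p.1.1 m + p.2,
        fun m n h => p.1.2.2 (add_right_cancel h)⟩
      invFun := fun e => (⟨fun m => e m - e i0, by simp,
        fun m n h => e.injective (by simpa [sub_left_inj] using h)⟩, e i0)
      left_inv := fun p => by
        refine Prod.ext (Subtype.ext (funext fun m => ?_)) ?_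
        · show (p.1.1 m + p.2) - (p.1.1 i0 + p.2) = p.1.1 m
          rw [p.1.2.1]; ring
        · show p.1.1 i0 + p.2 = p.2
          rw [p.1.2.1, zero_add]
      right_inv := fun e => by
        ext m
        show (e m - e i0) + e i0 = e m
        ring }
  have hemb : D * (N + M * K) = (N + M * K).descFactorial M := by
    have h1 : D * (N + M * K) = Nat.card ({f : Fin M → ZMod (N + M * K) //
        f i0 = 0 ∧ Function.Injective f} × ZMod (N + M * K)) := by
      rw [Nat.card_prod, Nat.card_zmod]
    rw [h1, Nat.card_congr e2, Nat.card_eq_fintype_card, Fintype.card_embedding_eq,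
      ZMod.card, Fintype.card_fin]
  -- Part C : orbit counting
  let GG : (Quot (rl M N K) × Equiv.Perm (Fin M)) →
      {q : (Fin M → ℤ) ⧸ gam M N K // reg M N K q} :=
    fun p => act p.2 p.1.out
  have hGGbij : Function.Bijective GG := by
    constructor
    · rintro ⟨c, σ⟩ ⟨c', σ'⟩ h
      have key : ∀ (d : Quot (rl M N K)) (τ : Equiv.Perm (Fin M)),
          Quot.mk (rl M N K) (act τ d.out) = d := by
        intro d τ
        have hrel : rl M N K d.out (act τ d.out) := rl_iff.mpr ⟨τ, rfl⟩
        rw [← Quot.sound hrel, Quot.out_eq]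
      have hc : c = c' := by rw [← key c σ, ← key c' σ']; exact congrArg _ h
      subst hc
      have hGG : act σ c.out = act σ' c.out := h
      have h2 : act (σ * σ'⁻¹) c.out = c.out := by
        rw [← act_mul, hGG, act_mul, mul_inv_cancel, act_one]
      have h3 : σ * σ'⁻¹ = 1 := act_free hN i0 h2
      exact Prod.ext rfl (mul_inv_eq_one.mp h3)
    · intro q
      have hrel : rl M N K (Quot.mk (rl M N K) q).out q :=
        (rl_equivalence.eqvGen_iff).mp (Quot.eq.mp (Quot.out_eq _))
      obtain ⟨σ, hσ⟩ := rl_iff.mp hrel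
      exact ⟨(Quot.mk (rl M N K) q, σ), hσ⟩
  have hM1 : Nat.card (Equiv.Perm (Fin M)) = M.factorial := by
    rw [Nat.card_eq_fintype_card, Fintype.card_perm, Fintype.card_fin]
  have horb : Nat.card {q : (Fin M → ℤ) ⧸ gam M N K // reg M N K q}
      = Nat.card (Quot (rl M N K)) * M.factorial := by
    rw [← Nat.card_eq_of_bijective GG hGGbij, Nat.card_prod, hM1]
  -- Final arithmetic
  have hcm : Nat.card (Quot (rl M N K)) * M.factorial = D * N := horb.symm.trans hcard1
  have hq1 : (Nat.card (Quot (rl M N K)) : ℚ) * (M.factorial : ℚ) = (D : ℚ) * N := by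
    exact_mod_cast congrArg (Nat.cast : ℕ → ℚ) hcm
  have hq2 : (D : ℚ) * ((N : ℚ) + M * K) = ((N + M * K).descFactorial M : ℚ) := by
    exact_mod_cast hemb
  have hq3 : ((N + M * K).descFactorial M : ℚ)
      = (M.factorial : ℚ) * ((N + M * K).choose M : ℚ) := by
    exact_mod_cast Nat.descFactorial_eq_factorial_mul_choose (N + M * K) M
  have hKM : K * M + N = N + M * K := by ring
  rw [hKM]
  have hfac : (M.factorial : ℚ) ≠ 0 := by positivity
  have hLQ : ((N : ℚ) + M * K) ≠ 0 := by positivity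
  have hden : ((K : ℚ) * M + N) = ((N : ℚ) + M * K) := by ring
  rw [hden]
  have h5 : (Nat.card (Quot (rl M N K)) : ℚ) * ((N : ℚ) + M * K) * (M.factorial : ℚ)
      = (N : ℚ) * ((N + M * K).choose M : ℚ) * (M.factorial : ℚ) := by
    linear_combination ((N : ℚ) + M * K) * hq1 + (N : ℚ) * hq2 + (N : ℚ) * hq3
  have h6 := mul_right_cancel₀ hfac h5
  rw [div_mul_eq_mul_div, eq_div_iff hLQ]
  exact h6

end CRO

theorem count_regular_orbits (M N K : ℕ) (hM : 0 < M) (hN : 0 < N) (hK : 0 < K) :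
    let a : ℤ := N + ((M : ℤ) - 1) * K
    let b : ℤ := -K
    let Γ : AddSubgroup (Fin M → ℤ) :=
      AddSubgroup.closure (Set.range fun n : Fin M => fun m => if m = n then a else b)
    -- an equivalence class is regular if all its representatives have pairwise
    -- distinct coordinates
    let Regular : ((Fin M → ℤ) ⧸ Γ) → Prop := fun q =>
      ∀ I : Fin M → ℤ, QuotientAddGroup.mk' Γ I = q → ∀ m n, m ≠ n → I m ≠ I n
    -- the permutation group acts by permuting coordinates; two regular classes are
    -- in the same orbit iff some permutation maps one to the other
    let rel : {q : (Fin M → ℤ) ⧸ Γ // Regular q} → {q : (Fin M → ℤ) ⧸ Γ // Regular q} → Prop :=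
      fun q q' => ∃ σ : Equiv.Perm (Fin M), ∃ I : Fin M → ℤ,
        QuotientAddGroup.mk' Γ I = q.1 ∧ QuotientAddGroup.mk' Γ (I ∘ σ) = q'.1
    (Nat.card (Quot rel) : ℚ) = (N : ℚ) / (K * M + N) * (Nat.choose (K * M + N) M) := by
  intro a b Γ Regular rel
  exact CRO.master M N K hM hN hK
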